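/- Let $P$ be an orthogonal projection matrix on $\mathbb{R}^d$ written as $P = UU^T$ with $U^TU = I$. If $U = (U_1 : U_2)$ where the column space of $U_1$ equals the row space of $\tilde X P$ and $\tilde X U_2 = 0$, and if $U_1^T \tilde X_\varepsilon^T \tilde X_\varepsilon U_2 = 0$ and $U_1^T \tilde X_\varepsilon^T \tilde X_\varepsilon U_1$ is positive definite, then $\tilde X P (P \tilde X_\varepsilon^T \tilde X_\varepsilon P)^+ = \tilde X U_1 (U_1^T \tilde X_\varepsilon^T \tilde X_\varepsilon U_1)^{-1} U_1^T$ and hence the null space of $\tilde X P (P\tilde X_\varepsilon^T \tilde X_\varepsilon P)^+$ equals the null space of $\tilde X P$. -/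

import Mathlib

open Matrix

def IsMoorePenrose {m n : ℕ} (A : Matrix (Fin m) (Fin n) ℝ)
    (B : Matrix (Fin n) (Fin m) ℝ) : Prop :=
  A * B * A = A ∧ B * A * B = B ∧ (A * B)ᵀ = A * B ∧ (B * A)ᵀ = B * A

lemma mp_unique {k : ℕ} {A B C : Matrix (Fin k) (Fin k) ℝ}
    (hB : IsMoorePenrose A B) (hC : IsMoorePenrose A C) : B = C := by
  obtain ⟨hB1, hB2, hB3, hB4⟩ := hB
  obtain ⟨hC1, hC2, hC3, hC4⟩ := hC
  have hAB : A * B = A * C := by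
    calc A * B = (A * B)ᵀ := hB3.symm
    _ = Bᵀ * Aᵀ := by rw [transpose_mul]
    _ = Bᵀ * (A * C * A)ᵀ := by rw [hC1]
    _ = Bᵀ * (Aᵀ * (A * C)ᵀ) := by rw [transpose_mul]
    _ = (A * B)ᵀ * (A * C)ᵀ := by simp only [transpose_mul, Matrix.mul_assoc]
    _ = (A * B) * (A * C) := by rw [hB3, hC3]
    _ = (A * B * A) * C := by noncomm_ring
    _ = A * C := by rw [hB1]
  have hBA : B * A = C * A := by
    calc B * A = (B * A)ᵀ := hB4.symm
    _ = Aᵀ * Bᵀ := by rw [transpose_mul]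
    _ = (A * C * A)ᵀ * Bᵀ := by rw [hC1]
    _ = (C * A)ᵀ * Aᵀ * Bᵀ := by simp only [transpose_mul, Matrix.mul_assoc]
    _ = (C * A)ᵀ * (B * A)ᵀ := by simp only [transpose_mul, Matrix.mul_assoc]
    _ = (C * A) * (B * A) := by rw [hB4, hC4]
    _ = C * (A * B * A) := by noncomm_ring
    _ = C * A := by rw [hB1]
  calc B = B * A * B := hB2.symm
  _ = B * A * C := by rw [Matrix.mul_assoc, hAB, ← Matrix.mul_assoc]
  _ = C * A * C := by rw [hBA]
  _ = C := hC2

theorem stmt_14 (n m d r₁ r₂ : ℕ)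
    (X : Matrix (Fin n) (Fin d) ℝ) (Xe : Matrix (Fin m) (Fin d) ℝ)
    (P : Matrix (Fin d) (Fin d) ℝ)
    (U₁ : Matrix (Fin d) (Fin r₁) ℝ) (U₂ : Matrix (Fin d) (Fin r₂) ℝ)
    (hP : P = Matrix.fromCols U₁ U₂ * (Matrix.fromCols U₁ U₂)ᵀ)
    (hU : (Matrix.fromCols U₁ U₂)ᵀ * Matrix.fromCols U₁ U₂ = 1)
    (hcol : Submodule.span ℝ (Set.range U₁ᵀ) =
      Submodule.span ℝ (Set.range (X * P)))
    (hXU₂ : X * U₂ = 0)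
    (horth : U₁ᵀ * Xeᵀ * Xe * U₂ = 0)
    (hpd : (U₁ᵀ * Xeᵀ * Xe * U₁).PosDef)
    (Pinv : Matrix (Fin d) (Fin d) ℝ)
    (hPinv : IsMoorePenrose (P * Xeᵀ * Xe * P) Pinv) :
    X * P * Pinv = X * U₁ * (U₁ᵀ * Xeᵀ * Xe * U₁)⁻¹ * U₁ᵀ ∧
    {v : Fin d → ℝ | (X * P * Pinv).mulVec v = 0} =
      {v : Fin d → ℝ | (X * P).mulVec v = 0} := by
  set A := U₁ᵀ * Xeᵀ * Xe * U₁ with hA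
  -- block identities from hU
  have hblocks : fromBlocks (U₁ᵀ * U₁) (U₁ᵀ * U₂) (U₂ᵀ * U₁) (U₂ᵀ * U₂)
      = fromBlocks (1 : Matrix (Fin r₁) (Fin r₁) ℝ) 0 0 (1 : Matrix (Fin r₂) (Fin r₂) ℝ) := by
    rw [← fromRows_mul_fromCols, ← transpose_fromCols, hU, fromBlocks_one]
  have h11 : U₁ᵀ * U₁ = 1 := congrArg Matrix.toBlocks₁₁ hblocks
  have h12 : U₁ᵀ * U₂ = 0 := congrArg Matrix.toBlocks₁₂ hblocks
  have h21 : U₂ᵀ * U₁ = 0 := congrArg Matrix.toBlocks₂₁ hblocks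
  have hPsum : P = U₁ * U₁ᵀ + U₂ * U₂ᵀ := by
    rw [hP, transpose_fromCols, fromCols_mul_fromRows]
  have hPsymm : Pᵀ = P := by rw [hPsum]; simp [transpose_add, transpose_mul]
  set M := P * Xeᵀ * Xe * P with hM
  have hMsymm : Mᵀ = M := by
    rw [hM]; simp only [transpose_mul, transpose_transpose, hPsymm]; simp only [Matrix.mul_assoc]
  -- A symmetric, invertible
  have hAsymm : Aᵀ = A := by
    have := hpd.isHermitian.eq
    simpa [Matrix.conjTranspose_eq_transpose_of_trivial] using this
  have hAunit : IsUnit A.det := isUnit_iff_ne_zero.mpr (ne_of_gt hpd.det_pos)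
  have hAinv : A * A⁻¹ = 1 := Matrix.mul_nonsing_inv A hAunit
  have hAinv' : A⁻¹ * A = 1 := Matrix.nonsing_inv_mul A hAunit
  -- orthogonality transposed
  have horth' : U₂ᵀ * (Xeᵀ * Xe) * U₁ = 0 := by
    have := congrArg Matrix.transpose horth
    simpa [transpose_mul, Matrix.mul_assoc] using this
  have hPU₁ : P * U₁ = U₁ := by
    rw [hPsum, Matrix.add_mul, Matrix.mul_assoc, Matrix.mul_assoc, h11, h21]
    simp
  have hMU₁ : M * U₁ = U₁ * A := by
    calc M * U₁ = P * (Xeᵀ * Xe) * (P * U₁) := by rw [hM]; simp only [Matrix.mul_assoc]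
    _ = (U₁ * U₁ᵀ + U₂ * U₂ᵀ) * (Xeᵀ * Xe) * U₁ := by rw [hPU₁, hPsum]
    _ = U₁ * (U₁ᵀ * (Xeᵀ * Xe) * U₁) + U₂ * (U₂ᵀ * (Xeᵀ * Xe) * U₁) := by simp only [Matrix.add_mul, Matrix.mul_assoc]
    _ = U₁ * A := by rw [horth', hA]; simp [Matrix.mul_assoc]
  have hU₁M : U₁ᵀ * M = A * U₁ᵀ := by
    have := congrArg Matrix.transpose hMU₁
    simpa [transpose_mul, hMsymm, hAsymm] using this
  -- Pinv symmetric
  have hPinvT : IsMoorePenrose M Pinvᵀ := by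
    obtain ⟨h1, h2, h3, h4⟩ := hPinv
    refine ⟨?_, ?_, ?_, ?_⟩
    · calc M * Pinvᵀ * M = (Mᵀ * Pinv * Mᵀ)ᵀ := by simp [transpose_mul, Matrix.mul_assoc]
      _ = M := by rw [hMsymm, h1, hMsymm]
    · calc Pinvᵀ * M * Pinvᵀ = (Pinv * Mᵀ * Pinv)ᵀ := by simp [transpose_mul, Matrix.mul_assoc]
      _ = Pinvᵀ := by rw [hMsymm, h2]
    · calc (M * Pinvᵀ)ᵀ = Pinv * M := by rw [transpose_mul, transpose_transpose, hMsymm]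
      _ = (Pinv * M)ᵀ := h4.symm
      _ = M * Pinvᵀ := by rw [transpose_mul, hMsymm]
    · calc (Pinvᵀ * M)ᵀ = M * Pinv := by rw [transpose_mul, transpose_transpose, hMsymm]
      _ = (M * Pinv)ᵀ := h3.symm
      _ = Pinvᵀ * M := by rw [transpose_mul, hMsymm]
  have hPinvsymm : Pinvᵀ = Pinv := (mp_unique hPinvT hPinv)
  -- key identities
  have h6 : U₁ᵀ * Pinv * M = U₁ᵀ := by
    have h1 := hPinv.1  -- M * Pinv * M = M
    have : A * (U₁ᵀ * Pinv * M) = A * U₁ᵀ := by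
      calc A * (U₁ᵀ * Pinv * M) = (U₁ᵀ * M) * Pinv * M := by rw [hU₁M]; simp only [Matrix.mul_assoc]
      _ = U₁ᵀ * (M * Pinv * M) := by simp only [Matrix.mul_assoc]
      _ = U₁ᵀ * M := by rw [h1]
      _ = A * U₁ᵀ := hU₁M
    have h4 := congrArg (fun Z => A⁻¹ * Z) this
    simp only [← Matrix.mul_assoc] at h4
    rw [hAinv', Matrix.one_mul] at h4
    exact h4
  have h7 : M * Pinv * U₁ = U₁ := by
    have := congrArg Matrix.transpose h6
    simpa [transpose_mul, hMsymm, hPinvsymm, Matrix.mul_assoc] using this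
  have hXP : X * P = X * U₁ * U₁ᵀ := by
    rw [hPsum, Matrix.mul_add, ← Matrix.mul_assoc, ← Matrix.mul_assoc, hXU₂]
    simp
  have hkey : U₁ᵀ * (M * Pinv) = U₁ᵀ := by
    calc U₁ᵀ * (M * Pinv) = U₁ᵀ * (M * Pinv)ᵀ := by rw [hPinv.2.2.1]
    _ = (M * Pinv * U₁)ᵀ := by simp only [transpose_mul, transpose_transpose, Matrix.mul_assoc]
    _ = U₁ᵀ := by rw [h7]
  have goal1 : X * P * Pinv = X * U₁ * A⁻¹ * U₁ᵀ := by
    calc X * P * Pinv = X * U₁ * U₁ᵀ * Pinv := by rw [hXP]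
    _ = X * U₁ * A⁻¹ * ((A * U₁ᵀ) * Pinv) := by rw [← Matrix.mul_assoc, ← Matrix.mul_assoc, Matrix.mul_assoc _ A⁻¹ A, hAinv']; simp [Matrix.mul_assoc]
    _ = X * U₁ * A⁻¹ * (U₁ᵀ * (M * Pinv)) := by rw [← hU₁M]; simp only [Matrix.mul_assoc]
    _ = X * U₁ * A⁻¹ * U₁ᵀ := by rw [hkey]
  -- injectivity of X * U₁
  have hinj : ∀ w : Fin r₁ → ℝ, (X * U₁).mulVec w = 0 → w = 0 := by
    intro w hw
    have hmem : U₁.mulVec w ∈ Submodule.span ℝ (Set.range (X * P)) := by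
      rw [← hcol, show Set.range U₁ᵀ = Set.range U₁.col from rfl, ← Matrix.range_mulVecLin U₁]
      exact ⟨w, rfl⟩
    rw [show Set.range (X * P) = Set.range ((X * P)ᵀ.col) by rw [Matrix.col, transpose_transpose],
      ← Matrix.range_mulVecLin ((X * P)ᵀ)] at hmem
    obtain ⟨c, hc⟩ := hmem
    have hXPU₁ : X * P * U₁ = X * U₁ := by rw [Matrix.mul_assoc, hPU₁]
    have hdot : (U₁.mulVec w) ⬝ᵥ (U₁.mulVec w) = 0 := by
      have hc' : ((X * P)ᵀ).mulVec c = U₁.mulVec w := hc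
      calc (U₁.mulVec w) ⬝ᵥ (U₁.mulVec w) = ((X * P)ᵀ).mulVec c ⬝ᵥ U₁.mulVec w := by rw [hc']
      _ = c ⬝ᵥ (X * P).mulVec (U₁.mulVec w) := by
          rw [Matrix.mulVec_transpose, ← dotProduct_mulVec]
      _ = c ⬝ᵥ (X * P * U₁).mulVec w := by rw [Matrix.mulVec_mulVec]
      _ = 0 := by rw [hXPU₁, hw, dotProduct_zero]
    have hU₁w : U₁.mulVec w = 0 := dotProduct_self_eq_zero.mp hdot
    calc w = (1 : Matrix (Fin r₁) (Fin r₁) ℝ).mulVec w := by simp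
    _ = (U₁ᵀ * U₁).mulVec w := by rw [h11]
    _ = U₁ᵀ.mulVec (U₁.mulVec w) := by rw [← Matrix.mulVec_mulVec]
    _ = 0 := by rw [hU₁w, Matrix.mulVec_zero]
  refine ⟨goal1, ?_⟩
  ext v
  simp only [Set.mem_setOf_eq]
  rw [goal1, hXP]
  constructor
  · intro h
    have hv : (X * U₁).mulVec ((A⁻¹ * U₁ᵀ).mulVec v) = 0 := by
      rw [Matrix.mulVec_mulVec, ← Matrix.mul_assoc]
      exact h
    have h0 : (A⁻¹ * U₁ᵀ).mulVec v = 0 := hinj _ hv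
    have hU₁v : U₁ᵀ.mulVec v = 0 := by
      have := congrArg (A.mulVec) h0
      rwa [Matrix.mulVec_mulVec, ← Matrix.mul_assoc, hAinv, Matrix.one_mul,
        Matrix.mulVec_zero] at this
    rw [← Matrix.mulVec_mulVec, hU₁v, Matrix.mulVec_zero]
  · intro h
    have hv : (X * U₁).mulVec (U₁ᵀ.mulVec v) = 0 := by
      rw [Matrix.mulVec_mulVec]; exact h
    have hU₁v : U₁ᵀ.mulVec v = 0 := hinj _ hv
    rw [← Matrix.mulVec_mulVec, hU₁v, Matrix.mulVec_zero]
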